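/- Let a : ℕ → ℤ, let α_1, …, α_r be distinct nonzero complex numbers and λ_1, …, λ_r ∈ ℂ[X] polynomials such that a(n) = λ_1(n)·α_1^n + ⋯ + λ_r(n)·α_r^n for all n ≥ 1. Suppose λ_1 is not the zero polynomial, |α_1| > 1, and |α_i| < |α_1| for every i ≥ 2 such that λ_i is not the zero polynomial. Then exactly one of the following two mutually exclusive alternatives holds: (1) there exists n_0 such that either (a(n))_{n ≥ n_0} is strictly increasing, or (−a(n))_{n ≥ n_0} is strictly increasing; (2) the sequence a has infinitely many sign changes, i.e. both the set {n : a(n) > 0} and the set {n : a(n) < 0} are infinite. -/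

import Mathlib

open Polynomial
open Filter Topology


-- exclusivity helper
lemma aux_mono_pos (a : ℕ → ℤ) (n₀ : ℕ) (h : ∀ n, n₀ ≤ n → a n < a (n+1)) :
    {n : ℕ | a n < 0}.Finite := by
  have key : ∀ k : ℕ, a n₀ + k ≤ a (n₀ + k) := by
    intro k
    induction k with
    | zero => simp
    | succ k ih =>
      have := h (n₀ + k) (Nat.le_add_right _ _)
      rw [show n₀ + (k+1) = n₀ + k + 1 from rfl]
      push_cast
      omega
  apply Set.Finite.subset (Set.finite_Iio (n₀ + (-(a n₀)).toNat + 1))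
  intro n hn
  simp only [Set.mem_setOf_eq] at hn
  simp only [Set.mem_Iio]
  by_contra hcon
  push_neg at hcon
  have h1 : n₀ ≤ n := by omega
  have := key (n - n₀)
  rw [Nat.add_sub_cancel' h1] at this
  omega

-- polynomial ratio tendsto
lemma aux_poly_tendsto (p : ℂ[X]) :
    Tendsto (fun n : ℕ => p.eval (n : ℂ) / (n : ℂ) ^ p.natDegree) atTop (𝓝 p.leadingCoeff) := by
  have h : ∀ᶠ n : ℕ in atTop, p.eval (n : ℂ) / (n : ℂ) ^ p.natDegree
      = ∑ k ∈ Finset.range (p.natDegree + 1), p.coeff k / (n : ℂ) ^ (p.natDegree - k) := by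
    filter_upwards [eventually_ge_atTop 1] with n hn
    have hn0 : (n : ℂ) ≠ 0 := Nat.cast_ne_zero.2 (by omega)
    rw [Polynomial.eval_eq_sum_range, Finset.sum_div]
    apply Finset.sum_congr rfl
    intro k hk
    simp only [Finset.mem_range] at hk
    rw [div_eq_div_iff (pow_ne_zero _ hn0) (pow_ne_zero _ hn0)]
    rw [mul_assoc, ← pow_add]
    congr 2
    omega
  rw [tendsto_congr' h]
  have : p.leadingCoeff = ∑ k ∈ Finset.range (p.natDegree + 1),
      (if k = p.natDegree then p.coeff p.natDegree else 0) := by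
    rw [Finset.sum_ite_eq' (Finset.range (p.natDegree+1)) p.natDegree,
      if_pos (Finset.self_mem_range_succ _)]
    rfl
  rw [this]
  apply tendsto_finset_sum
  intro k hk
  simp only [Finset.mem_range] at hk
  rcases eq_or_ne k p.natDegree with h | h
  · subst h
    simpa using tendsto_const_nhds
  · simp only [if_neg h]
    have hd : 0 < p.natDegree - k := by omega
    rw [tendsto_zero_iff_norm_tendsto_zero]
    have hpow : Tendsto (fun n : ℕ => ((n : ℝ)) ^ (p.natDegree - k)) atTop atTop :=
      (tendsto_pow_atTop (by omega)).comp tendsto_natCast_atTop_atTop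
    have := Tendsto.div_atTop (tendsto_const_nhds (x := ‖p.coeff k‖) (f := atTop)) hpow
    convert this using 2 with n
    simp

-- remainder term small
lemma aux_rem (p : ℂ[X]) (γ : ℂ) (b : ℝ) (hb : 1 < b) (hγ : ‖γ‖ < b) (d : ℕ) :
    Tendsto (fun n : ℕ => ‖p.eval (n:ℂ) * γ ^ n‖ / ((n:ℝ) ^ d * b ^ n)) atTop (𝓝 0) := by
  set e := p.natDegree
  set C := ‖p.leadingCoeff‖ + 1 with hC
  set x := ‖γ‖ / b with hx
  have hb0 : (0:ℝ) < b := by linarith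
  have hx0 : 0 ≤ x := div_nonneg (norm_nonneg _) hb0.le
  have hx1 : x < 1 := (div_lt_one hb0).2 hγ
  have hbound : ∀ᶠ n : ℕ in atTop, ‖p.eval (n:ℂ)‖ ≤ C * (n:ℝ) ^ e := by
    have h1 := ((aux_poly_tendsto p).norm).eventually_le_const
      (lt_add_of_pos_right _ one_pos)
    filter_upwards [h1, eventually_ge_atTop 1] with n h1 hn
    have hne : (0:ℝ) < (n:ℝ) ^ e := by positivity
    have : ‖p.eval (n:ℂ)‖ / (n:ℝ) ^ e ≤ C := by
      rw [show ‖p.eval (n:ℂ)‖ / (n:ℝ)^e = ‖p.eval (n:ℂ) / (n:ℂ)^e‖ by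
        simp [norm_div]]
      exact h1
    calc ‖p.eval (n:ℂ)‖ = ‖p.eval (n:ℂ)‖ / (n:ℝ)^e * (n:ℝ)^e := by field_simp
    _ ≤ C * (n:ℝ)^e := by apply mul_le_mul_of_nonneg_right this hne.le
  have hmain : Tendsto (fun n : ℕ => C * ((n:ℝ) ^ e * x ^ n)) atTop (𝓝 0) := by
    have := tendsto_pow_const_mul_const_pow_of_lt_one e hx0 hx1
    simpa using this.const_mul C
  apply squeeze_zero' _ _ hmain
  · filter_upwards with n
    positivity
  · filter_upwards [hbound, eventually_ge_atTop 1] with n hbd hn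
    have hn1 : (1:ℝ) ≤ (n:ℝ) := by exact_mod_cast hn
    have hnd : (1:ℝ) ≤ (n:ℝ) ^ d := by exact one_le_pow₀ hn1
    have hpos : (0:ℝ) < (n:ℝ)^d * b^n := by positivity
    rw [div_le_iff₀ hpos]
    have h2 : ‖p.eval (n:ℂ) * γ ^ n‖ ≤ C * (n:ℝ)^e * (‖γ‖)^n := by
      rw [norm_mul, norm_pow]
      apply mul_le_mul hbd le_rfl (by positivity) (by positivity)
    calc ‖p.eval (n:ℂ) * γ ^ n‖ ≤ C * (n:ℝ)^e * (‖γ‖)^n := h2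
    _ = C * ((n:ℝ)^e * x^n) * b^n := by
        rw [hx, div_pow]
        field_simp
    _ ≤ C * ((n:ℝ)^e * x^n) * ((n:ℝ)^d * b^n) := by
        nlinarith [pow_nonneg hx0 n, pow_nonneg hb0.le n, pow_nonneg (le_trans zero_le_one hn1) e, mul_nonneg (mul_nonneg (by positivity : (0:ℝ) ≤ C) (by positivity : (0:ℝ) ≤ (n:ℝ)^e * x^n)) (pow_nonneg hb0.le n)]

/-- Dichotomy for integer sequences with a dominant root: exactly one of the following holds.
(1) From some index on, either `a` or `-a` is strictly increasing.
(2) `a` changes sign infinitely often: both `{n | a n > 0}` and `{n | a n < 0}` are infinite. -/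
theorem eventually_monotone_or_infinitely_many_sign_changes
    (a : ℕ → ℤ) (r : ℕ) (hr : 0 < r)
    (α : Fin r → ℂ) (lam : Fin r → Polynomial ℂ)
    (hinj : Function.Injective α) (hα0 : ∀ i : Fin r, α i ≠ 0)
    (hrep : ∀ n : ℕ, 1 ≤ n → (a n : ℂ) = ∑ i : Fin r, (lam i).eval (n : ℂ) * α i ^ n)
    (hlam1 : lam ⟨0, hr⟩ ≠ 0)
    (habs1 : 1 < ‖α ⟨0, hr⟩‖)
    (hdom : ∀ i : Fin r, i ≠ ⟨0, hr⟩ → lam i ≠ 0 →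
      ‖α i‖ < ‖α ⟨0, hr⟩‖) :
    Xor'
      (∃ n₀ : ℕ, (∀ n : ℕ, n₀ ≤ n → a n < a (n + 1)) ∨ (∀ n : ℕ, n₀ ≤ n → -a n < -a (n + 1)))
      ({n : ℕ | 0 < a n}.Infinite ∧ {n : ℕ | a n < 0}.Infinite) := by
  classical
  -- mutual exclusivity
  have hnPQ : ∀ n₀ : ℕ,
      ((∀ n : ℕ, n₀ ≤ n → a n < a (n + 1)) ∨ (∀ n : ℕ, n₀ ≤ n → -a n < -a (n + 1))) →
      ({n : ℕ | 0 < a n}.Infinite ∧ {n : ℕ | a n < 0}.Infinite) → False := by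
    rintro n₀ (h | h) ⟨hpos, hneg⟩
    · exact hneg (aux_mono_pos a n₀ h)
    · have h1 := aux_mono_pos (fun n => -a n) n₀ h
      have h2 : {n : ℕ | 0 < a n}.Finite := by
        convert h1 using 1
        ext n
        simp only [Set.mem_setOf_eq]
        omega
      exact hpos h2
  set i0 : Fin r := ⟨0, hr⟩ with hi0
  set β : ℂ := α i0 with hβ
  set p : ℂ[X] := lam i0 with hp
  set d : ℕ := p.natDegree with hd
  set c : ℂ := p.leadingCoeff with hc
  have hc0 : c ≠ 0 := fun h => hlam1 (Polynomial.leadingCoeff_eq_zero.mp h)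
  set b : ℝ := ‖β‖ with hbdef
  have hb : 1 < b := habs1
  have hb0 : (0 : ℝ) < b := lt_trans one_pos hb
  set w : ℂ := β / (b : ℂ) with hw
  have hβ0 : β ≠ 0 := hα0 i0
  have hwnorm : ‖w‖ = 1 := by
    rw [hw, norm_div, Complex.norm_real, Real.norm_eq_abs, abs_of_pos hb0,
      ← hbdef, div_self hb0.ne']
  set D : ℕ → ℝ := fun n => (n : ℝ) ^ d * b ^ n with hD
  have hDpos : ∀ n : ℕ, 1 ≤ n → 0 < D n := by
    intro n hn
    have : (0:ℝ) < (n:ℝ) := by exact_mod_cast hn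
    positivity
  set g : ℕ → ℝ := fun n => (a n : ℝ) / D n with hg
  -- the key asymptotic fact
  have key1 : Tendsto (fun n : ℕ => ((g n : ℝ) : ℂ) - c * w ^ n) atTop (𝓝 0) := by
    have hrep' : ∀ n : ℕ, 1 ≤ n → (a n : ℂ) - p.eval (n:ℂ) * β ^ n
        = ∑ i ∈ Finset.univ.erase i0, (lam i).eval (n:ℂ) * α i ^ n := by
      intro n hn
      rw [hrep n hn, ← Finset.add_sum_erase Finset.univ _ (Finset.mem_univ i0)]
      ring
    have hterm1 : Tendsto (fun n : ℕ => ((a n : ℂ) - p.eval (n:ℂ) * β ^ n) / ((D n : ℝ) : ℂ))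
        atTop (𝓝 0) := by
      have hS : Tendsto (fun n : ℕ =>
          ∑ i ∈ Finset.univ.erase i0, ‖(lam i).eval (n:ℂ) * α i ^ n‖ / D n) atTop (𝓝 0) := by
        have h0 : (0:ℝ) = ∑ i ∈ Finset.univ.erase i0, (0:ℝ) := by simp
        rw [h0]
        apply tendsto_finset_sum
        intro i hi
        rcases eq_or_ne (lam i) 0 with hz | hz
        · simpa [hz] using (tendsto_const_nhds : Tendsto (fun _ : ℕ => (0:ℝ)) atTop (𝓝 0))
        · exact aux_rem (lam i) (α i) b hb (hdom i (Finset.ne_of_mem_erase hi) hz) d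
      apply squeeze_zero_norm' _ hS
      filter_upwards [eventually_ge_atTop 1] with n hn
      rw [hrep' n hn, norm_div, Complex.norm_real, Real.norm_eq_abs, abs_of_pos (hDpos n hn),
        ← Finset.sum_div]
      gcongr
      exact norm_sum_le _ _
    have hterm2 : Tendsto (fun n : ℕ => (p.eval (n:ℂ) / (n:ℂ) ^ d - c) * w ^ n)
        atTop (𝓝 0) := by
      apply squeeze_zero_norm (a := fun n : ℕ => ‖p.eval (n:ℂ) / (n:ℂ) ^ d - c‖)
      · intro n
        rw [norm_mul, norm_pow, hwnorm, one_pow, mul_one]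
      · have := ((aux_poly_tendsto p).sub (tendsto_const_nhds (x := c))).norm
        simpa [hc, hd] using this
    have heq : ∀ᶠ n : ℕ in atTop, ((g n : ℝ) : ℂ) - c * w ^ n
        = ((a n : ℂ) - p.eval (n:ℂ) * β ^ n) / ((D n : ℝ) : ℂ)
          + (p.eval (n:ℂ) / (n:ℂ) ^ d - c) * w ^ n := by
      filter_upwards [eventually_ge_atTop 1] with n hn
      have hn0 : (n : ℂ) ≠ 0 := Nat.cast_ne_zero.2 (by omega)
      have hbC : ((b : ℝ) : ℂ) ≠ 0 := by exact_mod_cast hb0.ne'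
      have hDC : ((D n : ℝ) : ℂ) = (n:ℂ) ^ d * ((b:ℝ):ℂ) ^ n := by
        rw [hD]; push_cast; ring
      have hwpow : w ^ n = β ^ n / ((b:ℝ):ℂ) ^ n := by rw [hw, div_pow]
      rw [hg]
      push_cast
      rw [hwpow, hDC]
      field_simp
      ring
    rw [tendsto_congr' heq]
    simpa using hterm1.add hterm2
  -- imaginary and real part limits
  have hIm : Tendsto (fun n : ℕ => (c * w ^ n).im) atTop (𝓝 0) := by
    have h := (Complex.continuous_im.tendsto 0).comp key1
    have heq : (fun n : ℕ => (((g n : ℝ) : ℂ) - c * w ^ n).im) = fun n => -(c * w ^ n).im := by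
      funext n; simp
    rw [Function.comp_def, heq] at h
    simpa using h.neg
  have hRe : Tendsto (fun n : ℕ => g n - (c * w ^ n).re) atTop (𝓝 0) := by
    have h := (Complex.continuous_re.tendsto 0).comp key1
    have heq : (fun n : ℕ => (((g n : ℝ) : ℂ) - c * w ^ n).re)
        = fun n => g n - (c * w ^ n).re := by
      funext n; simp
    rw [Function.comp_def, heq] at h
    simpa using h
  -- w is real
  have hwim : w.im = 0 := by
    by_contra hne
    have h1 : Tendsto (fun n : ℕ => (c * w ^ (n + 1)).im) atTop (𝓝 0) :=
      (tendsto_add_atTop_iff_nat 1).2 hIm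
    have h2 : Tendsto (fun n : ℕ => (c * w ^ n).re * w.im) atTop (𝓝 0) := by
      have heq : (fun n : ℕ => (c * w ^ n).re * w.im)
          = fun n => (c * w ^ (n + 1)).im - (c * w ^ n).im * w.re := by
        funext n
        rw [pow_succ, ← mul_assoc, Complex.mul_im]
        ring
      rw [heq]
      simpa using h1.sub (hIm.mul_const w.re)
    have h3 : Tendsto (fun n : ℕ => (c * w ^ n).re) atTop (𝓝 0) := by
      have := h2.mul_const (w.im)⁻¹
      simpa [mul_assoc, mul_inv_cancel₀ hne] using this
    have h4 : Tendsto (fun n : ℕ => (c * w ^ n).re ^ 2 + (c * w ^ n).im ^ 2) atTop (𝓝 0) := by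
      have := (h3.mul h3).add (hIm.mul hIm)
      simpa [sq] using this
    have h5 : ∀ n : ℕ, (c * w ^ n).re ^ 2 + (c * w ^ n).im ^ 2 = ‖c‖ ^ 2 := by
      intro n
      have : (c * w ^ n).re ^ 2 + (c * w ^ n).im ^ 2 = ‖c * w ^ n‖ ^ 2 := by
        rw [Complex.sq_norm, Complex.normSq_apply]
        ring
      rw [this, norm_mul, norm_pow, hwnorm, one_pow, mul_one]
    have h6 : ‖c‖ ^ 2 = 0 := by
      have := (tendsto_congr h5).1 h4
      exact (tendsto_nhds_unique this tendsto_const_nhds).symm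
    exact hc0 (norm_eq_zero.1 (by nlinarith [norm_nonneg c]))
  have hwre : w = ((w.re : ℝ) : ℂ) := Complex.ext rfl (by simp [hwim])
  have hwre1 : w.re = 1 ∨ w.re = -1 := by
    have habs : |w.re| = 1 := by
      rw [hwre] at hwnorm
      rwa [Complex.norm_real, Real.norm_eq_abs] at hwnorm
    rcases abs_eq (by norm_num : (0:ℝ) ≤ 1) |>.1 habs with h | h
    · exact Or.inl h
    · exact Or.inr h
  have hwabs : |w.re| = 1 := by rcases hwre1 with h | h <;> rw [h] <;> norm_num
  have hcwn : ∀ n : ℕ, c * w ^ n = c * ((w.re ^ n : ℝ) : ℂ) := by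
    intro n
    conv_lhs => rw [hwre]
    push_cast
    ring
  -- leading coefficient is real
  have hcim : c.im = 0 := by
    have habs : ∀ n : ℕ, |(c * w ^ n).im| = |c.im| := by
      intro n
      rw [hcwn n, Complex.mul_im]
      simp only [Complex.ofReal_im, Complex.ofReal_re, mul_zero, zero_add]
      rw [abs_mul, abs_pow, hwabs, one_pow, mul_one]
    have h1 : Tendsto (fun n : ℕ => |(c * w ^ n).im|) atTop (𝓝 0) := by
      simpa using hIm.abs
    have := (tendsto_congr habs).1 h1
    have h2 := tendsto_nhds_unique this tendsto_const_nhds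
    exact abs_eq_zero.1 h2.symm
  set cr : ℝ := c.re with hcr
  have hcr0 : cr ≠ 0 := by
    intro h
    apply hc0
    exact Complex.ext h hcim
  have hmain : Tendsto (fun n : ℕ => g n - cr * w.re ^ n) atTop (𝓝 0) := by
    have heq : (fun n : ℕ => g n - (c * w ^ n).re) = fun n => g n - cr * w.re ^ n := by
      funext n
      rw [hcwn n, Complex.mul_re]
      simp [hcim, ← Complex.ofReal_pow, hcr]
    rwa [heq] at hRe
  clear key1 hIm hRe hrep hdom hinj
  rcases hwre1 with hw1 | hw1
  · -- β = b > 1 : eventually monotone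
    have hglim : Tendsto g atTop (𝓝 cr) := by
      have := hmain.add_const cr
      simpa [hw1] using this
    have hratio : Tendsto (fun n : ℕ => D (n + 1) / D n) atTop (𝓝 b) := by
      have h1 : Tendsto (fun n : ℕ => ((n : ℝ) + 1) / (n : ℝ)) atTop (𝓝 1) := by
        have h0 : Tendsto (fun n : ℕ => 1 / (n : ℝ)) atTop (𝓝 0) := tendsto_one_div_atTop_nhds_zero_nat
        have heq : ∀ᶠ n : ℕ in atTop, ((n : ℝ) + 1) / (n : ℝ) = 1 + 1 / (n : ℝ) := by
          filter_upwards [eventually_ge_atTop 1] with n hn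
          have : (n : ℝ) ≠ 0 := Nat.cast_ne_zero.2 (by omega)
          field_simp
        rw [tendsto_congr' heq]
        simpa using (tendsto_const_nhds (x := (1:ℝ))).add h0
      have h2 : Tendsto (fun n : ℕ => (((n : ℝ) + 1) / (n : ℝ)) ^ d) atTop (𝓝 1) := by
        simpa using h1.pow d
      have heq : ∀ᶠ n : ℕ in atTop, D (n + 1) / D n = (((n : ℝ) + 1) / (n : ℝ)) ^ d * b := by
        filter_upwards [eventually_ge_atTop 1] with n hn
        have hn0 : (n : ℝ) ≠ 0 := Nat.cast_ne_zero.2 (by omega)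
        rw [hD]
        push_cast
        rw [div_pow]
        field_simp
        ring
      rw [tendsto_congr' heq]
      simpa using h2.mul_const b
    have hgs : Tendsto (fun n : ℕ => g (n + 1)) atTop (𝓝 cr) :=
      (tendsto_add_atTop_iff_nat 1).2 hglim
    have hdiff : Tendsto (fun n : ℕ => ((a (n + 1) : ℝ) - (a n : ℝ)) / D n)
        atTop (𝓝 (cr * (b - 1))) := by
      have heq : ∀ᶠ n : ℕ in atTop, ((a (n + 1) : ℝ) - (a n : ℝ)) / D n
          = g (n + 1) * (D (n + 1) / D n) - g n := by
        filter_upwards [eventually_ge_atTop 1] with n hn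
        have hDn := (hDpos n hn).ne'
        have hDn1 := (hDpos (n + 1) (by omega)).ne'
        rw [hg]
        field_simp
        try ring
      rw [tendsto_congr' heq]
      have heq2 : cr * (b - 1) = cr * b - cr := by ring
      rw [heq2]
      exact (hgs.mul hratio).sub hglim
    rcases lt_or_gt_of_ne hcr0 with hneg | hpos
    · -- -a eventually increasing
      have hev : ∀ᶠ n : ℕ in atTop, ((a (n + 1) : ℝ) - (a n : ℝ)) / D n < 0 :=
        hdiff.eventually_lt_const (by nlinarith)
      obtain ⟨n₀, hn₀⟩ := (hev.and (eventually_ge_atTop 1)).exists_forall_of_atTop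
      have hmono : ∀ n : ℕ, n₀ ≤ n → -a n < -a (n + 1) := by
        intro n hn
        obtain ⟨hlt, hn1⟩ := hn₀ n hn
        have hDp := hDpos n hn1
        have h1 : (a (n + 1) : ℝ) - (a n : ℝ) < 0 := by
          have := mul_neg_of_neg_of_pos hlt hDp
          rwa [div_mul_cancel₀ _ hDp.ne'] at this
        have h2 : a (n + 1) < a n := by exact_mod_cast (by linarith : (a (n+1) : ℝ) < a n)
        omega
      exact Or.inl ⟨⟨n₀, Or.inr hmono⟩, fun hq => hnPQ n₀ (Or.inr hmono) hq⟩
    · -- a eventually increasing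
      have hev : ∀ᶠ n : ℕ in atTop, 0 < ((a (n + 1) : ℝ) - (a n : ℝ)) / D n :=
        hdiff.eventually_const_lt (by nlinarith)
      obtain ⟨n₀, hn₀⟩ := (hev.and (eventually_ge_atTop 1)).exists_forall_of_atTop
      have hmono : ∀ n : ℕ, n₀ ≤ n → a n < a (n + 1) := by
        intro n hn
        obtain ⟨hlt, hn1⟩ := hn₀ n hn
        have hDp := hDpos n hn1
        have h1 : (0:ℝ) < (a (n + 1) : ℝ) - (a n : ℝ) := by
          have := mul_pos hlt hDp
          rwa [div_mul_cancel₀ _ hDp.ne'] at this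
        exact_mod_cast (by linarith : (a n : ℝ) < (a (n+1) : ℝ))
      exact Or.inl ⟨⟨n₀, Or.inl hmono⟩, fun hq => hnPQ n₀ (Or.inl hmono) hq⟩
  · -- β = -b : infinitely many sign changes
    have hcomp : Tendsto (fun m : ℕ => 2 * m) atTop atTop :=
      tendsto_atTop_mono (fun m => by simp only [id_eq]; omega) tendsto_id
    have hcomp1 : Tendsto (fun m : ℕ => 2 * m + 1) atTop atTop :=
      tendsto_atTop_mono (fun m => by simp only [id_eq]; omega) tendsto_id
    have h2m : Tendsto (fun m : ℕ => g (2 * m)) atTop (𝓝 cr) := by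
      have h := hmain.comp hcomp
      simp only [Function.comp_def] at h
      have heq : (fun m : ℕ => g (2 * m) - cr * w.re ^ (2 * m))
          = fun m : ℕ => g (2 * m) - cr := by
        funext m
        rw [hw1, pow_mul]
        norm_num
      rw [heq] at h
      simpa using h.add_const cr
    have h2m1 : Tendsto (fun m : ℕ => g (2 * m + 1)) atTop (𝓝 (-cr)) := by
      have h := hmain.comp hcomp1
      simp only [Function.comp_def] at h
      have heq : (fun m : ℕ => g (2 * m + 1) - cr * w.re ^ (2 * m + 1))
          = fun m : ℕ => g (2 * m + 1) + cr := by
        funext m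
        rw [hw1, pow_succ, pow_mul]
        norm_num
      rw [heq] at h
      have := h.add_const (-cr)
      simpa using this
    have hpos_of : ∀ n : ℕ, 1 ≤ n → 0 < g n → 0 < a n := by
      intro n hn hgn
      have hDp := hDpos n hn
      have : (0:ℝ) < (a n : ℝ) := by
        have := mul_pos hgn hDp
        simp only [hg] at this
        rwa [div_mul_cancel₀ _ hDp.ne'] at this
      exact_mod_cast this
    have hneg_of : ∀ n : ℕ, 1 ≤ n → g n < 0 → a n < 0 := by
      intro n hn hgn
      have hDp := hDpos n hn
      have : (a n : ℝ) < 0 := by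
        have := mul_neg_of_neg_of_pos hgn hDp
        simp only [hg] at this
        rwa [div_mul_cancel₀ _ hDp.ne'] at this
      exact_mod_cast this
    have hQ : {n : ℕ | 0 < a n}.Infinite ∧ {n : ℕ | a n < 0}.Infinite := by
      rcases lt_or_gt_of_ne hcr0 with hneg | hpos
      · -- cr < 0 : evens negative, odds positive
        obtain ⟨M1, hM1⟩ := (h2m.eventually_lt_const hneg).exists_forall_of_atTop
        obtain ⟨M2, hM2⟩ := (h2m1.eventually_const_lt (by linarith : (0:ℝ) < -cr)).exists_forall_of_atTop
        constructor
        · apply Set.infinite_of_forall_exists_gt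
          intro N
          exact ⟨2 * (M2 + N + 1) + 1, Set.mem_setOf.2 (hpos_of _ (by omega) (hM2 (M2 + N + 1) (by omega))), by omega⟩
        · apply Set.infinite_of_forall_exists_gt
          intro N
          exact ⟨2 * (M1 + N + 1), Set.mem_setOf.2 (hneg_of _ (by omega) (hM1 (M1 + N + 1) (by omega))), by omega⟩
      · -- cr > 0 : evens positive, odds negative
        obtain ⟨M1, hM1⟩ := (h2m.eventually_const_lt hpos).exists_forall_of_atTop
        obtain ⟨M2, hM2⟩ := (h2m1.eventually_lt_const (by linarith : -cr < 0)).exists_forall_of_atTop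
        constructor
        · apply Set.infinite_of_forall_exists_gt
          intro N
          exact ⟨2 * (M1 + N + 1), Set.mem_setOf.2 (hpos_of _ (by omega) (hM1 (M1 + N + 1) (by omega))), by omega⟩
        · apply Set.infinite_of_forall_exists_gt
          intro N
          exact ⟨2 * (M2 + N + 1) + 1, Set.mem_setOf.2 (hneg_of _ (by omega) (hM2 (M2 + N + 1) (by omega))), by omega⟩
    exact Or.inr ⟨hQ, fun hp => by obtain ⟨n₀, h⟩ := hp; exact hnPQ n₀ h hQ⟩
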